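/- Let E be a metric space. A sequence {f_n} in C_b(E) converges to f in the weak topology σ(C_b(E), ca(E)) and is bounded there if and only if sup_n ‖f_n‖_∞ < ∞ and f_n → f pointwise on E. -/

import Mathlib

open Filter Topology MeasureTheory

/-- Integration of a function against a finite countably additive signed Borel measure,
via its Jordan decomposition. -/
noncomputable def intSM' {E : Type*} [MeasurableSpace E]
    (s : SignedMeasure E) (f : E → ℝ) : ℝ :=
  (∫ x, f x ∂s.toJordanDecomposition.posPart) -
    ∫ x, f x ∂s.toJordanDecomposition.negPart

/-- The weak topology σ(C_b(E), ca(E)) on bounded continuous functions. -/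
noncomputable def tauSigma (E : Type*) [MetricSpace E] [MeasurableSpace E] [BorelSpace E] :
    TopologicalSpace (BoundedContinuousFunction E ℝ) :=
  ⨅ s : SignedMeasure E,
    TopologicalSpace.induced (fun f : BoundedContinuousFunction E ℝ => intSM' s ⇑f)
      inferInstance

/-! ### Auxiliary lemmas -/

lemma jordan_eq {E : Type*} [MeasurableSpace E]
    (μ ν : Measure E) [IsFiniteMeasure μ] [IsFiniteMeasure ν] :
    μ + (μ.toSignedMeasure - ν.toSignedMeasure).toJordanDecomposition.negPart
      = ν + (μ.toSignedMeasure - ν.toSignedMeasure).toJordanDecomposition.posPart := by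
  set s := μ.toSignedMeasure - ν.toSignedMeasure with hs
  have h := s.toSignedMeasure_toJordanDecomposition
  rw [JordanDecomposition.toSignedMeasure] at h
  rw [← Measure.toSignedMeasure_eq_toSignedMeasure_iff,
    Measure.toSignedMeasure_add, Measure.toSignedMeasure_add]
  rw [hs] at h
  have h' := sub_eq_sub_iff_add_eq_add.mp h
  rw [← h', add_comm]

lemma intSM'_eq {E : Type*} [MetricSpace E] [MeasurableSpace E] [BorelSpace E]
    (μ ν : Measure E) [IsFiniteMeasure μ] [IsFiniteMeasure ν]
    (h : BoundedContinuousFunction E ℝ) :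
    intSM' (μ.toSignedMeasure - ν.toSignedMeasure) ⇑h = ∫ x, h x ∂μ - ∫ x, h x ∂ν := by
  have key := jordan_eq μ ν
  have h1 : ∫ x, h x ∂(μ + (μ.toSignedMeasure - ν.toSignedMeasure).toJordanDecomposition.negPart)
      = ∫ x, h x ∂(ν + (μ.toSignedMeasure - ν.toSignedMeasure).toJordanDecomposition.posPart) := by
    rw [key]
  rw [integral_add_measure (h.integrable _) (h.integrable _),
    integral_add_measure (h.integrable _) (h.integrable _)] at h1
  rw [intSM']
  linarith

lemma tendsto_tauSigma_iff {E : Type*} [MetricSpace E] [MeasurableSpace E] [BorelSpace E]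
    (f : ℕ → BoundedContinuousFunction E ℝ) (g : BoundedContinuousFunction E ℝ) :
    Tendsto f atTop (@nhds _ (tauSigma E) g) ↔
      ∀ s : SignedMeasure E,
        Tendsto (fun n => intSM' s ⇑(f n)) atTop (𝓝 (intSM' s ⇑g)) := by
  rw [tauSigma, _root_.nhds_iInf, tendsto_iInf]
  refine forall_congr' fun s => ?_
  rw [nhds_induced, tendsto_comap_iff]
  rfl

lemma intSM'_dirac {E : Type*} [MetricSpace E] [MeasurableSpace E] [BorelSpace E]
    (x : E) (h : BoundedContinuousFunction E ℝ) :
    intSM' (Measure.dirac x).toSignedMeasure ⇑h = h x := by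
  have h0 : (Measure.dirac x).toSignedMeasure
      = (Measure.dirac x).toSignedMeasure - (0 : Measure E).toSignedMeasure := by
    simp
  rw [h0, intSM'_eq, integral_dirac]
  simp

lemma abs_intSM'_le {E : Type*} [MetricSpace E] [MeasurableSpace E] [BorelSpace E]
    (s : SignedMeasure E) (h : BoundedContinuousFunction E ℝ) :
    |intSM' s ⇑h| ≤ ((s.toJordanDecomposition.posPart Set.univ).toReal
      + (s.toJordanDecomposition.negPart Set.univ).toReal) * ‖h‖ := by
  have b1 : ∀ (μ : Measure E) [IsFiniteMeasure μ],
      |∫ x, h x ∂μ| ≤ (μ Set.univ).toReal * ‖h‖ := by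
    intro μ _
    calc |∫ x, h x ∂μ| ≤ ∫ x, ‖h‖ ∂μ := by
          rw [← Real.norm_eq_abs]
          exact norm_integral_le_of_norm_le (integrable_const ‖h‖)
            (Eventually.of_forall fun x => h.norm_coe_le_norm x)
      _ = (μ Set.univ).toReal * ‖h‖ := by simp [integral_const, smul_eq_mul, measureReal_def]
  have := b1 s.toJordanDecomposition.posPart
  have := b1 s.toJordanDecomposition.negPart
  rw [intSM']
  calc |(∫ x, h x ∂s.toJordanDecomposition.posPart) - ∫ x, h x ∂s.toJordanDecomposition.negPart|
      ≤ |∫ x, h x ∂s.toJordanDecomposition.posPart| + |∫ x, h x ∂s.toJordanDecomposition.negPart| :=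
        abs_sub _ _
    _ ≤ _ := by rw [add_mul]; gcongr

lemma intSM'_sub {E : Type*} [MetricSpace E] [MeasurableSpace E] [BorelSpace E]
    (s : SignedMeasure E) (h h' : BoundedContinuousFunction E ℝ) :
    intSM' s ⇑(h - h') = intSM' s ⇑h - intSM' s ⇑h' := by
  simp only [intSM', BoundedContinuousFunction.coe_sub, Pi.sub_apply]
  rw [integral_sub (h.integrable _) (h'.integrable _),
    integral_sub (h.integrable _) (h'.integrable _)]
  ring

lemma intSM'_smul {E : Type*} [MeasurableSpace E]
    (s : SignedMeasure E) (c : ℝ) (h : E → ℝ) :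
    intSM' s (c • h) = c * intSM' s h := by
  simp only [intSM', Pi.smul_apply, smul_eq_mul]
  rw [show (fun x => c * h x) = fun x => c • h x from rfl, integral_smul, integral_smul,
    smul_eq_mul, smul_eq_mul]
  ring

lemma intSM'_cont {E : Type*} [MetricSpace E] [MeasurableSpace E] [BorelSpace E]
    (s : SignedMeasure E) :
    Continuous (fun h : BoundedContinuousFunction E ℝ => intSM' s ⇑h) := by
  set M := (s.toJordanDecomposition.posPart Set.univ).toReal
      + (s.toJordanDecomposition.negPart Set.univ).toReal with hM
  have hM0 : 0 ≤ M := by positivity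
  refine (LipschitzWith.of_dist_le_mul (K := M.toNNReal) fun h h' => ?_).continuous
  rw [Real.dist_eq, ← intSM'_sub, dist_eq_norm, Real.coe_toNNReal _ hM0]
  exact abs_intSM'_le s (h - h')

lemma norm_le_tauSigma (E : Type*) [MetricSpace E] [MeasurableSpace E] [BorelSpace E] :
    (inferInstance : TopologicalSpace (BoundedContinuousFunction E ℝ)) ≤ tauSigma E :=
  le_iInf fun s => continuous_iff_le_induced.mp (intSM'_cont s)

lemma bound_of_vonN {E : Type*} [MetricSpace E] [MeasurableSpace E] [BorelSpace E]
    (f : ℕ → BoundedContinuousFunction E ℝ)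
    (hb : @Bornology.IsVonNBounded ℝ (BoundedContinuousFunction E ℝ) _ _ _ (tauSigma E)
      (Set.range f)) (s : SignedMeasure E) :
    ∃ C, ∀ n, |intSM' s ⇑(f n)| ≤ C := by
  set φ := fun h : BoundedContinuousFunction E ℝ => intSM' s ⇑h with hφ
  have hcont : @Continuous _ _ (tauSigma E) _ φ :=
    continuous_iff_le_induced.mpr (iInf_le _ s)
  have h0 : φ 0 = 0 := by
    simp [hφ, intSM']
  have hV : (φ ⁻¹' Metric.ball 0 1) ∈ @nhds _ (tauSigma E) 0 := by
    refine @ContinuousAt.preimage_mem_nhds _ _ (tauSigma E) _ _ _ _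
      (@Continuous.continuousAt _ _ (tauSigma E) _ _ _ hcont) ?_
    rw [h0]
    exact Metric.ball_mem_nhds 0 one_pos
  have habs := hb hV
  obtain ⟨r, hr⟩ := absorbs_iff_norm.mp habs
  set c : ℝ := max r 1 with hc
  have hcr : r ≤ ‖c‖ := by
    rw [Real.norm_eq_abs, abs_of_pos (lt_of_lt_of_le one_pos (le_max_right r 1))]
    exact le_max_left _ _
  have hsub := hr c hcr
  refine ⟨|c|, fun n => ?_⟩
  obtain ⟨v, hv, hfv⟩ := hsub (Set.mem_range_self n)
  have : φ (f n) = c * φ v := by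
    rw [← hfv, hφ]
    simp only [BoundedContinuousFunction.coe_smul]
    exact intSM'_smul s c ⇑v
  rw [show intSM' s ⇑(f n) = φ (f n) from rfl, this, abs_mul]
  have hv1 : |φ v| < 1 := by
    simpa [Real.dist_eq] using hv
  nlinarith [abs_nonneg c, abs_nonneg (φ v)]

/-! ### ℓ¹ machinery and uniform boundedness -/

/-- the positive part measure Σ (a k)⁺ δ_{x k} -/
noncomputable def posM {E : Type*} [MeasurableSpace E] (a : ℕ → ℝ) (x : ℕ → E) : Measure E :=
  Measure.sum (fun k => ENNReal.ofReal (a k) • Measure.dirac (x k))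

lemma posM_finite {E : Type*} [MeasurableSpace E] {a : ℕ → ℝ} (ha : Summable fun k => ‖a k‖)
    (x : ℕ → E) : IsFiniteMeasure (posM a x) := by
  constructor
  rw [posM, Measure.sum_apply _ MeasurableSet.univ]
  calc ∑' k, (ENNReal.ofReal (a k) • Measure.dirac (x k)) Set.univ
      = ∑' k, ENNReal.ofReal (a k) := by
        simp [Measure.smul_apply, smul_eq_mul]
    _ ≤ ∑' k, (‖a k‖₊ : ENNReal) := by
        refine ENNReal.tsum_le_tsum fun k => ?_
        exact (ENNReal.ofReal_le_ofReal (le_abs_self _)).trans_eq ((ofReal_norm (a k)).trans (enorm_eq_nnnorm (a k)))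
    _ < ⊤ := by
        rw [lt_top_iff_ne_top, ENNReal.tsum_coe_ne_top_iff_summable]
        exact NNReal.summable_coe.mp ha

lemma integral_posM {E : Type*} [MetricSpace E] [MeasurableSpace E] [BorelSpace E]
    {a : ℕ → ℝ} (ha : Summable fun k => ‖a k‖) (x : ℕ → E)
    (h : BoundedContinuousFunction E ℝ) :
    ∫ y, h y ∂(posM a x) = ∑' k, max (a k) 0 * h (x k) := by
  haveI : IsFiniteMeasure (Measure.sum fun k => ENNReal.ofReal (a k) • Measure.dirac (x k)) :=
    posM_finite ha x
  rw [posM, integral_sum_measure (h.integrable _)]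
  congr 1
  funext k
  rw [integral_smul_measure, integral_dirac, ENNReal.toReal_ofReal', smul_eq_mul]

/-- the signed measure Σ a k δ_{x k} -/
noncomputable def sgnM {E : Type*} [MeasurableSpace E] {a : ℕ → ℝ}
    (ha : Summable fun k => ‖a k‖) (x : ℕ → E) : SignedMeasure E :=
  haveI := posM_finite ha x
  haveI := posM_finite (a := -a) (by simpa using ha) x
  (posM a x).toSignedMeasure - (posM (-a) x).toSignedMeasure

lemma intSM'_sgnM {E : Type*} [MetricSpace E] [MeasurableSpace E] [BorelSpace E]
    {a : ℕ → ℝ} (ha : Summable fun k => ‖a k‖) (x : ℕ → E)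
    (h : BoundedContinuousFunction E ℝ) :
    intSM' (sgnM ha x) ⇑h = ∑' k, a k * h (x k) := by
  haveI := posM_finite ha x
  haveI := posM_finite (a := -a) (by simpa using ha) x
  rw [sgnM, intSM'_eq, integral_posM ha, integral_posM (a := -a) (by simpa using ha)]
  have key : ∀ b : ℕ → ℝ, (Summable fun k => ‖b k‖) →
      Summable fun k => max (b k) 0 * h (x k) := by
    intro b hb
    refine Summable.of_norm (Summable.of_nonneg_of_le (fun k => norm_nonneg _)
      (fun k => ?_) (hb.mul_right ‖h‖))
    rw [norm_mul]
    refine mul_le_mul ?_ (h.norm_coe_le_norm _) (norm_nonneg _) (norm_nonneg _)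
    rw [Real.norm_eq_abs, Real.norm_eq_abs, abs_of_nonneg (le_max_right _ _)]
    exact max_le (le_abs_self _) (abs_nonneg _)
  rw [← Summable.tsum_sub (key a ha) (key (-a) (by simpa using ha))]
  congr 1
  funext k
  rw [← sub_mul, Pi.neg_apply, max_zero_sub_max_neg_zero_eq_self]

lemma lp_summable_norm (a : lp (fun _ : ℕ => ℝ) 1) : Summable fun k => ‖a k‖ := by
  have := (lp.memℓp a).summable (p := 1) (by norm_num)
  simpa using this

lemma lp_norm_eq (a : lp (fun _ : ℕ => ℝ) 1) : ‖a‖ = ∑' k, ‖a k‖ := by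
  have := lp.norm_eq_tsum_rpow (p := 1) (by norm_num) a
  simpa using this

lemma lam_summable {E : Type*} [MetricSpace E] (h : BoundedContinuousFunction E ℝ)
    (x : ℕ → E) (a : ℕ → ℝ) (ha : Summable fun k => ‖a k‖) :
    Summable fun k => a k * h (x k) := by
  refine Summable.of_norm (Summable.of_nonneg_of_le (fun k => norm_nonneg _)
    (fun k => ?_) (ha.mul_left ‖h‖))
  rw [norm_mul, mul_comm ‖h‖]
  gcongr
  exact h.norm_coe_le_norm _

/-- The functional a ↦ Σ a_k h(x_k) on ℓ¹. -/
noncomputable def Lam {E : Type*} [MetricSpace E]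
    (h : BoundedContinuousFunction E ℝ) (x : ℕ → E) :
    lp (fun _ : ℕ => ℝ) 1 →L[ℝ] ℝ :=
  LinearMap.mkContinuous
    { toFun := fun a => ∑' k, a k * h (x k)
      map_add' := by
        intro a b
        simp only [lp.coeFn_add, Pi.add_apply, add_mul]
        exact Summable.tsum_add (lam_summable h x a (lp_summable_norm a))
          (lam_summable h x b (lp_summable_norm b))
      map_smul' := by
        intro c a
        simp only [lp.coeFn_smul, Pi.smul_apply, smul_eq_mul, RingHom.id_apply, mul_assoc]
        exact (lam_summable h x a (lp_summable_norm a)).tsum_mul_left c }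
    ‖h‖ (by
      intro a
      simp only [LinearMap.coe_mk, AddHom.coe_mk]
      calc ‖∑' k, a k * h (x k)‖ ≤ ∑' k, ‖a k * h (x k)‖ :=
            norm_tsum_le_tsum_norm ((lam_summable h x a (lp_summable_norm a)).norm)
        _ ≤ ∑' k, ‖h‖ * ‖a k‖ := by
            refine Summable.tsum_le_tsum (fun k => ?_)
              (lam_summable h x a (lp_summable_norm a)).norm
              ((lp_summable_norm a).mul_left ‖h‖)
            rw [norm_mul, mul_comm ‖h‖]
            gcongr
            exact h.norm_coe_le_norm _
        _ = ‖h‖ * ‖a‖ := by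
            rw [(lp_summable_norm a).tsum_mul_left, lp_norm_eq])

lemma exists_uniform_bound {E : Type*} [MetricSpace E] [MeasurableSpace E] [BorelSpace E]
    (f : ℕ → BoundedContinuousFunction E ℝ)
    (hb : ∀ s : SignedMeasure E, ∃ C, ∀ n, |intSM' s ⇑(f n)| ≤ C) (x : ℕ → E) :
    ∃ C, ∀ n k, |f n (x k)| ≤ C := by
  have hpt : ∀ a : lp (fun _ : ℕ => ℝ) 1, ∃ C, ∀ n, ‖Lam (f n) x a‖ ≤ C := by
    intro a
    obtain ⟨C, hC⟩ := hb (sgnM (lp_summable_norm a) x)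
    refine ⟨C, fun n => ?_⟩
    have he := intSM'_sgnM (lp_summable_norm a) x (f n)
    have : Lam (f n) x a = ∑' k, a k * (f n) (x k) := rfl
    rw [Real.norm_eq_abs, this, ← he]
    exact hC n
  obtain ⟨C', hC'⟩ := banach_steinhaus hpt
  refine ⟨C', fun n k => ?_⟩
  set e : lp (fun _ : ℕ => ℝ) 1 := lp.single 1 k 1 with he_def
  have hs : Lam (f n) x e = f n (x k) := by
    have h0 : (Lam (f n) x e : ℝ) = ∑' j, e j * (f n) (x j) := rfl
    rw [h0, tsum_eq_single k]
    · rw [he_def, lp.single_apply_self, one_mul]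
    · intro j hj
      rw [he_def, lp.single_apply_ne 1 k _ hj, zero_mul]
  have hnorm : ‖e‖ = 1 := by
    have := lp.norm_single (p := 1) (E := fun _ : ℕ => ℝ) (by norm_num) k (1:ℝ)
    rw [he_def, this]; simp
  calc |f n (x k)| = ‖Lam (f n) x e‖ := by rw [hs, Real.norm_eq_abs]
    _ ≤ ‖Lam (f n) x‖ * ‖e‖ := (Lam (f n) x).le_opNorm _
    _ ≤ C' := by rw [hnorm, mul_one]; exact hC' n

/-! ### Main theorem -/

/-- A sequence in C_b(E) is (von Neumann) bounded and convergent to g in the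
weak topology σ(C_b(E), ca(E)) iff it is sup-norm bounded and converges to g pointwise. -/
theorem stmt15 {E : Type*} [MetricSpace E] [MeasurableSpace E] [BorelSpace E]
    (f : ℕ → BoundedContinuousFunction E ℝ) (g : BoundedContinuousFunction E ℝ) :
    (@Bornology.IsVonNBounded ℝ (BoundedContinuousFunction E ℝ) _ _ _ (tauSigma E)
        (Set.range f) ∧
      Tendsto f atTop (@nhds _ (tauSigma E) g)) ↔
      ((∃ C : ℝ, ∀ n, ‖f n‖ ≤ C) ∧
        ∀ x : E, Tendsto (fun n => f n x) atTop (𝓝 (g x))) := by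
  constructor
  · rintro ⟨hb, ht⟩
    constructor
    · by_contra hC
      push_neg at hC
      have hN : ∀ k : ℕ, ∃ n, (k : ℝ) < ‖f n‖ := fun k => hC k
      choose N hNs using hN
      have hy : ∀ k : ℕ, ∃ y, (k : ℝ) < |f (N k) y| := by
        intro k
        by_contra hk
        push_neg at hk
        have : ‖f (N k)‖ ≤ (k : ℝ) :=
          BoundedContinuousFunction.norm_le (by positivity) |>.mpr hk
        exact absurd (hNs k) (not_lt.mpr this)
      choose y hys using hy
      obtain ⟨C, hC2⟩ := exists_uniform_bound f (bound_of_vonN f hb) y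
      obtain ⟨k, hk⟩ := exists_nat_gt C
      exact absurd (hys k) (not_lt.mpr ((hC2 (N k) k).trans hk.le))
    · intro x
      have := (tendsto_tauSigma_iff f g).mp ht (Measure.dirac x).toSignedMeasure
      simpa [intSM'_dirac] using this
  · rintro ⟨⟨C, hC⟩, hpt⟩
    constructor
    · refine Bornology.IsVonNBounded.of_topologicalSpace_le (norm_le_tauSigma E) ?_
      refine NormedSpace.isVonNBounded_of_isBounded _ ?_
      rw [isBounded_iff_forall_norm_le]
      exact ⟨C, by rintro _ ⟨n, rfl⟩; exact hC n⟩
    · rw [tendsto_tauSigma_iff]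
      intro s
      have hconv : ∀ (μ : Measure E) [IsFiniteMeasure μ],
          Tendsto (fun n => ∫ x, f n x ∂μ) atTop (𝓝 (∫ x, g x ∂μ)) := by
        intro μ _
        refine tendsto_integral_of_dominated_convergence (fun _ => C)
          (fun n => ((f n).continuous.measurable).aestronglyMeasurable)
          (integrable_const C)
          (fun n => Eventually.of_forall fun x => ((f n).norm_coe_le_norm x).trans (hC n))
          (Eventually.of_forall hpt)
      simp only [intSM']
      exact (hconv s.toJordanDecomposition.posPart).sub (hconv s.toJordanDecomposition.negPart)
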